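/- Let T ≥ 2 be an integer, let 1 ≤ s < r < e ≤ T be integers, and let f ∈ ℝ^T be continuous piecewise-linear on [s,e] with exactly one change-point (kink) at r, with kink magnitude Δ. Let C₃ = 63^{1/3}·(2√2 + 4)^{2/3} and C₁ = √(2/3)·C₃^{3/2} + √8, and suppose min{r − s, e − r} + 1 ≤ 2^{1/3}·C₃·(log T)^{1/3}/Δ^{2/3}. If X ∈ ℝ^T satisfies |⟨X − f, ϕ^b_{s,e}⟩| ≤ √(8·log T) for every integer b with s < b < e, then max over integers b with s < b < e of C^b_{s,e}(X) ≤ C₁·√(log T). -/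

import Mathlib

open Real Finset

set_option maxHeartbeats 2000000

/-- Normalizing constant `α^b_{s,e}` of the linear contrast vector. -/
noncomputable def alphaC (s b e : ℕ) : ℝ :=
  Real.sqrt (6 / (((e : ℝ) - s + 1) * (((e : ℝ) - s + 1) ^ 2 - 1) *
    (1 + ((e : ℝ) - b + 1) * ((b : ℝ) - s + 1) + ((e : ℝ) - b) * ((b : ℝ) - s))))

/-- Normalizing constant `β^b_{s,e}` of the linear contrast vector. -/
noncomputable def betaC (s b e : ℕ) : ℝ :=
  Real.sqrt ((((e : ℝ) - b + 1) * ((e : ℝ) - b)) / (((b : ℝ) - s + 1) * ((b : ℝ) - s)))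

/-- The linear contrast vector `ϕ^b_{s,e}`, given coordinatewise as a function of `t`. -/
noncomputable def phiC (s b e t : ℕ) : ℝ :=
  if s ≤ t ∧ t ≤ b then
    alphaC s b e * betaC s b e *
      (((e : ℝ) + 2 * b - 3 * s + 2) * t - ((b : ℝ) * e + (b : ℝ) * s - 2 * (s : ℝ) ^ 2 + 2 * s))
  else if b + 1 ≤ t ∧ t ≤ e then
    -(alphaC s b e / betaC s b e) *
      ((3 * (e : ℝ) - 2 * b - s + 2) * t - (2 * (e : ℝ) ^ 2 + 2 * e - (b : ℝ) * e - (b : ℝ) * s))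
  else 0

/-- Euclidean inner product on `ℝ^T`, with coordinates indexed by `1, …, T`. -/
noncomputable def innerT (T : ℕ) (x y : ℕ → ℝ) : ℝ := ∑ t ∈ Finset.Icc 1 T, x t * y t

/-- The contrast value `C^b_{s,e}(x) = |⟨x, ϕ^b_{s,e}⟩|`. -/
noncomputable def contrastC (T s b e : ℕ) (x : ℕ → ℝ) : ℝ := |innerT T x (phiC s b e)|

private lemma sum_range_cast (n : ℕ) : ∑ i ∈ Finset.range n, (i:ℝ) = n*(n-1)/2 := by
  induction n with
  | zero => simp
  | succ n ih => rw [Finset.sum_range_succ, ih]; push_cast; ring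

private lemma sum_range_sq (n : ℕ) : ∑ i ∈ Finset.range n, (i:ℝ)^2 = n*(n-1)*(2*n-1)/6 := by
  induction n with
  | zero => simp
  | succ n ih => rw [Finset.sum_range_succ, ih]; push_cast; ring

private lemma sum_Icc_id (s b : ℕ) (h : s ≤ b+1) :
    ∑ t ∈ Finset.Icc s b, (t:ℝ) = ((b:ℝ)*(b+1) - ((s:ℝ)-1)*s)/2 := by
  rw [← Finset.Ico_add_one_right_eq_Icc, Finset.sum_Ico_eq_sub _ h, sum_range_cast, sum_range_cast]
  push_cast; ring

private lemma sum_Icc_sq (s b : ℕ) (h : s ≤ b+1) :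
    ∑ t ∈ Finset.Icc s b, (t:ℝ)^2 = ((b:ℝ)*(b+1)*(2*b+1) - ((s:ℝ)-1)*s*(2*s-1))/6 := by
  rw [← Finset.Ico_add_one_right_eq_Icc, Finset.sum_Ico_eq_sub _ h, sum_range_sq, sum_range_sq]
  push_cast; ring

private lemma sum_Icc_quad (s b : ℕ) (h : s ≤ b+1) (p q c : ℝ) :
    ∑ t ∈ Finset.Icc s b, (p*(t:ℝ)^2 + q*(t:ℝ) + c)
      = p * (((b:ℝ)*(b+1)*(2*b+1) - ((s:ℝ)-1)*s*(2*s-1))/6)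
        + q * (((b:ℝ)*(b+1) - ((s:ℝ)-1)*s)/2) + c * ((b:ℝ)-s+1) := by
  rw [Finset.sum_add_distrib, Finset.sum_add_distrib, ← Finset.mul_sum, ← Finset.mul_sum,
    sum_Icc_sq s b h, sum_Icc_id s b h, Finset.sum_const, Nat.card_Icc, nsmul_eq_mul,
    Nat.cast_sub h]
  push_cast; ring

private lemma phiC_zero {s b e t : ℕ} (hsb : s < b) (hbe : b < e) (ht : t < s ∨ e < t) :
    phiC s b e t = 0 := by
  unfold phiC
  rw [if_neg (by omega), if_neg (by omega)]

section phiFacts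
variable {s b e : ℕ} (hs : 1 ≤ s) (hsb : s < b) (hbe : b < e)

private lemma betaC_pos (hsb : s < b) (hbe : b < e) : 0 < betaC s b e := by
  have h1 : (s:ℝ) + 1 ≤ b := by exact_mod_cast hsb
  have h2 : (b:ℝ) + 1 ≤ e := by exact_mod_cast hbe
  apply Real.sqrt_pos.mpr
  apply div_pos <;> apply mul_pos <;> linarith

private lemma betaC_sq (hsb : s < b) (hbe : b < e) :
    betaC s b e ^ 2 = (((e:ℝ) - b + 1) * ((e:ℝ) - b)) / (((b:ℝ) - s + 1) * ((b:ℝ) - s)) := by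
  apply Real.sq_sqrt
  have h1 : (s:ℝ) + 1 ≤ b := by exact_mod_cast hsb
  have h2 : (b:ℝ) + 1 ≤ e := by exact_mod_cast hbe
  have := betaC_pos hsb hbe
  apply div_nonneg <;> apply mul_nonneg <;> linarith

private lemma denA_pos (hsb : s < b) (hbe : b < e) :
    0 < ((e : ℝ) - s + 1) * (((e : ℝ) - s + 1) ^ 2 - 1) *
      (1 + ((e : ℝ) - b + 1) * ((b : ℝ) - s + 1) + ((e : ℝ) - b) * ((b : ℝ) - s)) := by
  have h1 : (s:ℝ) + 1 ≤ b := by exact_mod_cast hsb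
  have h2 : (b:ℝ) + 1 ≤ e := by exact_mod_cast hbe
  have f1 : (0:ℝ) < (e:ℝ) - s + 1 := by linarith
  have f2 : (0:ℝ) < ((e:ℝ) - s + 1) ^ 2 - 1 := by nlinarith
  have f3 : (0:ℝ) < 1 + ((e : ℝ) - b + 1) * ((b : ℝ) - s + 1) + ((e : ℝ) - b) * ((b : ℝ) - s) := by
    nlinarith [mul_nonneg (by linarith : (0:ℝ) ≤ (e:ℝ) - b + 1) (by linarith : (0:ℝ) ≤ (b:ℝ) - s + 1),
      mul_nonneg (by linarith : (0:ℝ) ≤ (e:ℝ) - b) (by linarith : (0:ℝ) ≤ (b:ℝ) - s)]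
  exact mul_pos (mul_pos f1 f2) f3

private lemma alphaC_sq (hsb : s < b) (hbe : b < e) :
    alphaC s b e ^ 2 = 6 / (((e : ℝ) - s + 1) * (((e : ℝ) - s + 1) ^ 2 - 1) *
      (1 + ((e : ℝ) - b + 1) * ((b : ℝ) - s + 1) + ((e : ℝ) - b) * ((b : ℝ) - s))) :=
  Real.sq_sqrt (le_of_lt (div_pos (by norm_num) (denA_pos hsb hbe)))

private lemma Icc_split (hsb : s < b) (hbe : b < e) (g : ℕ → ℝ) :
    ∑ t ∈ Finset.Icc s e, g t = ∑ t ∈ Finset.Icc s b, g t + ∑ t ∈ Finset.Icc (b+1) e, g t := by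
  have hu : Finset.Icc s e = Finset.Icc s b ∪ Finset.Icc (b+1) e := by
    ext t; simp only [Finset.mem_Icc, Finset.mem_union]; omega
  rw [hu, Finset.sum_union]
  rw [Finset.disjoint_left]
  intro t ht ht'
  simp only [Finset.mem_Icc] at ht ht'
  omega

private lemma restrict_sum {T : ℕ} (hs : 1 ≤ s) (hsb : s < b) (hbe : b < e) (heT : e ≤ T)
    (x : ℕ → ℝ) :
    ∑ t ∈ Finset.Icc 1 T, x t * phiC s b e t = ∑ t ∈ Finset.Icc s e, x t * phiC s b e t := by
  refine (Finset.sum_subset (Finset.Icc_subset_Icc hs heT) ?_).symm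
  intro t ht hnt
  simp only [Finset.mem_Icc] at ht hnt
  rw [phiC_zero hsb hbe (by omega), mul_zero]

private lemma phi_inner_linear (T : ℕ) (hs : 1 ≤ s) (hsb : s < b) (hbe : b < e) (heT : e ≤ T)
    (c d : ℝ) : ∑ t ∈ Finset.Icc 1 T, (c + d * t) * phiC s b e t = 0 := by
  have h1 : (s:ℝ) + 1 ≤ b := by exact_mod_cast hsb
  have h2 : (b:ℝ) + 1 ≤ e := by exact_mod_cast hbe
  set α := alphaC s b e with hαdef
  set β := betaC s b e with hβdef
  have hβpos := betaC_pos hsb hbe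
  rw [restrict_sum hs hsb hbe heT, Icc_split hsb hbe]
  have hL : ∑ t ∈ Finset.Icc s b, (c + d * t) * phiC s b e t
      = ∑ t ∈ Finset.Icc s b,
        ((α*β*(d*((e : ℝ) + 2 * b - 3 * s + 2)))*(t:ℝ)^2
          + (α*β*(c*((e : ℝ) + 2 * b - 3 * s + 2)
              - d*((b : ℝ) * e + (b : ℝ) * s - 2 * (s : ℝ) ^ 2 + 2 * s)))*(t:ℝ)
          + (α*β*(-(c*((b : ℝ) * e + (b : ℝ) * s - 2 * (s : ℝ) ^ 2 + 2 * s))))) := by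
    refine Finset.sum_congr rfl fun t ht => ?_
    rw [phiC, if_pos (Finset.mem_Icc.mp ht)]
    ring
  have hR : ∑ t ∈ Finset.Icc (b+1) e, (c + d * t) * phiC s b e t
      = ∑ t ∈ Finset.Icc (b+1) e,
        ((-(α/β)*(d*(3 * (e : ℝ) - 2 * b - s + 2)))*(t:ℝ)^2
          + (-(α/β)*(c*(3 * (e : ℝ) - 2 * b - s + 2)
              - d*(2 * (e : ℝ) ^ 2 + 2 * e - (b : ℝ) * e - (b : ℝ) * s)))*(t:ℝ)
          + (-(α/β)*(-(c*(2 * (e : ℝ) ^ 2 + 2 * e - (b : ℝ) * e - (b : ℝ) * s))))) := by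
    refine Finset.sum_congr rfl fun t ht => ?_
    have ht' := Finset.mem_Icc.mp ht
    rw [phiC, if_neg (by omega), if_pos ht']
    ring
  rw [hL, hR, sum_Icc_quad s b (by omega), sum_Icc_quad (b+1) e (by omega)]
  have hαβ : α * β = (α/β) * β^2 := by field_simp
  push_cast
  rw [hαβ, betaC_sq hsb hbe]
  have hDβ : (((b:ℝ) - s + 1) * ((b:ℝ) - s)) ≠ 0 :=
    ne_of_gt (mul_pos (by linarith) (by linarith))
  have hβ0 : β ≠ 0 := ne_of_gt hβpos
  have hD1 : ((b:ℝ) - s + 1) ≠ 0 := by linarith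
  have hD2 : ((b:ℝ) - s) ≠ 0 := by linarith
  field_simp
  ring

private lemma combine_norm (dα nβ dβ LL RR : ℝ) (hdα : dα ≠ 0) (hnβ : nβ ≠ 0) (hdβ : dβ ≠ 0)
    (key : 6 * (nβ^2 * LL + dβ^2 * RR) = dα * nβ * dβ) :
    6/dα * (nβ/dβ) * LL + 6/dα / (nβ/dβ) * RR = 1 := by
  field_simp
  linear_combination key

private lemma phi_norm (T : ℕ) (hs : 1 ≤ s) (hsb : s < b) (hbe : b < e) (heT : e ≤ T) :
    ∑ t ∈ Finset.Icc 1 T, phiC s b e t ^ 2 = 1 := by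
  have h1 : (s:ℝ) + 1 ≤ b := by exact_mod_cast hsb
  have h2 : (b:ℝ) + 1 ≤ e := by exact_mod_cast hbe
  set α := alphaC s b e with hαdef
  set β := betaC s b e with hβdef
  have hβpos := betaC_pos hsb hbe
  have hstep : ∑ t ∈ Finset.Icc 1 T, phiC s b e t ^ 2
      = ∑ t ∈ Finset.Icc 1 T, phiC s b e t * phiC s b e t := by
    refine Finset.sum_congr rfl fun t _ => by ring
  rw [hstep, restrict_sum hs hsb hbe heT, Icc_split hsb hbe]
  have hL : ∑ t ∈ Finset.Icc s b, phiC s b e t * phiC s b e t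
      = α^2*β^2*(((e:ℝ)+2*b-3*s+2)^2*(((b:ℝ)*(b+1)*(2*b+1) - ((s:ℝ)-1)*s*(2*s-1))/6)
          - 2*((e:ℝ)+2*b-3*s+2)*((b:ℝ)*e+b*s-2*(s:ℝ)^2+2*s)*(((b:ℝ)*(b+1)-((s:ℝ)-1)*s)/2)
          + ((b:ℝ)*e+b*s-2*(s:ℝ)^2+2*s)^2*((b:ℝ)-s+1)) := by
    have hpt : ∀ t ∈ Finset.Icc s b, phiC s b e t * phiC s b e t
        = (α^2*β^2*(((e:ℝ)+2*b-3*s+2)^2))*(t:ℝ)^2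
          + (α^2*β^2*(-2*((e:ℝ)+2*b-3*s+2)*((b:ℝ)*e+b*s-2*(s:ℝ)^2+2*s)))*(t:ℝ)
          + (α^2*β^2*(((b:ℝ)*e+b*s-2*(s:ℝ)^2+2*s)^2)) := by
      intro t ht
      rw [phiC, if_pos (Finset.mem_Icc.mp ht)]
      ring
    rw [Finset.sum_congr rfl hpt, sum_Icc_quad s b (by omega)]
    ring
  have hR : ∑ t ∈ Finset.Icc (b+1) e, phiC s b e t * phiC s b e t
      = α^2/β^2*((3*(e:ℝ)-2*b-s+2)^2*(((e:ℝ)*(e+1)*(2*e+1) - (b:ℝ)*(b+1)*(2*b+1))/6)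
          - 2*(3*(e:ℝ)-2*b-s+2)*(2*(e:ℝ)^2+2*e-(b:ℝ)*e-(b:ℝ)*s)*(((e:ℝ)*(e+1)-(b:ℝ)*(b+1))/2)
          + (2*(e:ℝ)^2+2*e-(b:ℝ)*e-(b:ℝ)*s)^2*((e:ℝ)-b)) := by
    have hpt : ∀ t ∈ Finset.Icc (b+1) e, phiC s b e t * phiC s b e t
        = (α^2/β^2*((3*(e:ℝ)-2*b-s+2)^2))*(t:ℝ)^2
          + (α^2/β^2*(-2*(3*(e:ℝ)-2*b-s+2)*(2*(e:ℝ)^2+2*e-(b:ℝ)*e-(b:ℝ)*s)))*(t:ℝ)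
          + (α^2/β^2*((2*(e:ℝ)^2+2*e-(b:ℝ)*e-(b:ℝ)*s)^2)) := by
      intro t ht
      have ht' := Finset.mem_Icc.mp ht
      rw [phiC, if_neg (by omega), if_pos ht']
      ring
    rw [Finset.sum_congr rfl hpt, sum_Icc_quad (b+1) e (by omega)]
    push_cast
    ring
  rw [hL, hR, alphaC_sq hsb hbe, betaC_sq hsb hbe]
  have hDβ : (((b:ℝ) - s + 1) * ((b:ℝ) - s)) ≠ 0 :=
    ne_of_gt (mul_pos (by linarith) (by linarith))
  have hNβ : (((e:ℝ) - b + 1) * ((e:ℝ) - b)) ≠ 0 :=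
    ne_of_gt (mul_pos (by linarith) (by linarith))
  have hDα := ne_of_gt (denA_pos hsb hbe)
  exact combine_norm _ _ _ _ _ hDα hNβ hDβ (by ring)

private lemma abs_inner_le (F : Finset ℕ) (f g : ℕ → ℝ) :
    |∑ t ∈ F, f t * g t| ≤ Real.sqrt (∑ t ∈ F, f t ^ 2) * Real.sqrt (∑ t ∈ F, g t ^ 2) := by
  rw [← Real.sqrt_sq_eq_abs, ← Real.sqrt_mul (Finset.sum_nonneg fun _ _ => sq_nonneg _)]
  exact Real.sqrt_le_sqrt (Finset.sum_mul_sq_le_sq_mul_sq F f g)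

private lemma signal_bound (T r : ℕ) (hs : 1 ≤ s) (hsr : s < r) (hre : r < e)
    (heT : e ≤ T) (hsb : s < b) (hbe : b < e)
    (f : ℕ → ℝ) (a₁ b₁ a₂ b₂ : ℝ)
    (hcont : a₁ + b₁ * r = a₂ + b₂ * r)
    (hf₁ : ∀ t, s ≤ t → t ≤ r → f t = a₁ + b₁ * t)
    (hf₂ : ∀ t, r ≤ t → t ≤ e → f t = a₂ + b₂ * t) :
    |∑ t ∈ Finset.Icc 1 T, f t * phiC s b e t|
      ≤ |b₁ - b₂| * Real.sqrt ((min ((r:ℝ)-s) ((e:ℝ)-r) + 1)^3 / 3) := by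
  have hphisub : ∀ F : Finset ℕ, F ⊆ Finset.Icc 1 T →
      Real.sqrt (∑ t ∈ F, phiC s b e t ^ 2) ≤ 1 := by
    intro F hF
    have hle : ∑ t ∈ F, phiC s b e t ^ 2 ≤ 1 := by
      calc ∑ t ∈ F, phiC s b e t ^ 2
          ≤ ∑ t ∈ Finset.Icc 1 T, phiC s b e t ^ 2 :=
            Finset.sum_le_sum_of_subset_of_nonneg hF (fun _ _ _ => sq_nonneg _)
        _ = 1 := phi_norm T hs hsb hbe heT
    calc Real.sqrt (∑ t ∈ F, phiC s b e t ^ 2) ≤ Real.sqrt 1 := Real.sqrt_le_sqrt hle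
      _ = 1 := Real.sqrt_one
  rcases le_total ((r:ℝ)-(s:ℝ)) ((e:ℝ)-(r:ℝ)) with hm | hm
  · -- min = r - s ; use right linear extension, support on Icc s r
    rw [min_eq_left hm]
    have h0 := phi_inner_linear T hs hsb hbe heT a₂ b₂
    have hdec : ∑ t ∈ Finset.Icc 1 T, f t * phiC s b e t
        = ∑ t ∈ Finset.Icc 1 T, (f t - (a₂ + b₂ * t)) * phiC s b e t := by
      have : ∑ t ∈ Finset.Icc 1 T, f t * phiC s b e t
          = ∑ t ∈ Finset.Icc 1 T, ((f t - (a₂ + b₂ * t)) * phiC s b e t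
              + (a₂ + b₂ * t) * phiC s b e t) :=
        Finset.sum_congr rfl fun t _ => by ring
      rw [this, Finset.sum_add_distrib, h0, add_zero]
    have hsupp : ∑ t ∈ Finset.Icc 1 T, (f t - (a₂ + b₂ * t)) * phiC s b e t
        = ∑ t ∈ Finset.Icc s r, (f t - (a₂ + b₂ * t)) * phiC s b e t := by
      refine (Finset.sum_subset (Finset.Icc_subset_Icc hs (show r ≤ T by omega)) ?_).symm
      intro t ht hnt
      simp only [Finset.mem_Icc] at ht hnt
      by_cases hte : s ≤ t ∧ t ≤ e
      · rw [hf₂ t (by omega) (by omega)]; ring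
      · rw [phiC_zero hsb hbe (by omega), mul_zero]
    have hval : ∑ t ∈ Finset.Icc s r, (f t - (a₂ + b₂ * t)) * phiC s b e t
        = ∑ t ∈ Finset.Icc s r, ((b₁ - b₂) * ((t:ℝ) - r)) * phiC s b e t := by
      refine Finset.sum_congr rfl fun t ht => ?_
      have ht' := Finset.mem_Icc.mp ht
      rw [hf₁ t ht'.1 ht'.2]
      linear_combination (phiC s b e t) * hcont
    rw [hdec, hsupp, hval]
    calc |∑ t ∈ Finset.Icc s r, ((b₁ - b₂) * ((t:ℝ) - r)) * phiC s b e t|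
        ≤ Real.sqrt (∑ t ∈ Finset.Icc s r, ((b₁ - b₂) * ((t:ℝ) - r)) ^ 2)
            * Real.sqrt (∑ t ∈ Finset.Icc s r, phiC s b e t ^ 2) := abs_inner_le _ _ _
      _ ≤ Real.sqrt (∑ t ∈ Finset.Icc s r, ((b₁ - b₂) * ((t:ℝ) - r)) ^ 2) * 1 := by
          have := hphisub (Finset.Icc s r) (Finset.Icc_subset_Icc hs (by omega))
          have hnn : (0:ℝ) ≤ Real.sqrt (∑ t ∈ Finset.Icc s r, ((b₁ - b₂) * ((t:ℝ) - r)) ^ 2) :=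
            Real.sqrt_nonneg _
          nlinarith [Real.sqrt_nonneg (∑ t ∈ Finset.Icc s r, phiC s b e t ^ 2)]
      _ ≤ |b₁ - b₂| * Real.sqrt ((((r:ℝ)-s) + 1)^3 / 3) := by
          rw [mul_one]
          have hq : ∑ t ∈ Finset.Icc s r, ((b₁ - b₂) * ((t:ℝ) - r)) ^ 2
              = (b₁ - b₂)^2 * ∑ t ∈ Finset.Icc s r,
                  ((1:ℝ)*(t:ℝ)^2 + (-2*(r:ℝ))*(t:ℝ) + (r:ℝ)^2) := by
            rw [Finset.mul_sum]
            exact Finset.sum_congr rfl fun t _ => by ring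
          have hr1 : (s:ℝ) + 1 ≤ r := by exact_mod_cast hsr
          have hSq : ∑ t ∈ Finset.Icc s r, ((1:ℝ)*(t:ℝ)^2 + (-2*(r:ℝ))*(t:ℝ) + (r:ℝ)^2)
              ≤ (((r:ℝ)-s) + 1)^3 / 3 := by
            rw [sum_Icc_quad s r (by omega)]
            nlinarith [sq_nonneg ((r:ℝ) - s)]
          rw [hq, Real.sqrt_mul (sq_nonneg _), Real.sqrt_sq_eq_abs]
          exact mul_le_mul_of_nonneg_left (Real.sqrt_le_sqrt hSq) (abs_nonneg _)
  · -- min = e - r ; use left linear extension, support on Icc r e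
    rw [min_eq_right hm]
    have h0 := phi_inner_linear T hs hsb hbe heT a₁ b₁
    have hdec : ∑ t ∈ Finset.Icc 1 T, f t * phiC s b e t
        = ∑ t ∈ Finset.Icc 1 T, (f t - (a₁ + b₁ * t)) * phiC s b e t := by
      have : ∑ t ∈ Finset.Icc 1 T, f t * phiC s b e t
          = ∑ t ∈ Finset.Icc 1 T, ((f t - (a₁ + b₁ * t)) * phiC s b e t
              + (a₁ + b₁ * t) * phiC s b e t) :=
        Finset.sum_congr rfl fun t _ => by ring
      rw [this, Finset.sum_add_distrib, h0, add_zero]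
    have hsupp : ∑ t ∈ Finset.Icc 1 T, (f t - (a₁ + b₁ * t)) * phiC s b e t
        = ∑ t ∈ Finset.Icc r e, (f t - (a₁ + b₁ * t)) * phiC s b e t := by
      refine (Finset.sum_subset (Finset.Icc_subset_Icc (show 1 ≤ r by omega) heT) ?_).symm
      intro t ht hnt
      simp only [Finset.mem_Icc] at ht hnt
      by_cases hte : s ≤ t ∧ t ≤ e
      · rw [hf₁ t (by omega) (by omega)]; ring
      · rw [phiC_zero hsb hbe (by omega), mul_zero]
    have hval : ∑ t ∈ Finset.Icc r e, (f t - (a₁ + b₁ * t)) * phiC s b e t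
        = ∑ t ∈ Finset.Icc r e, ((b₂ - b₁) * ((t:ℝ) - r)) * phiC s b e t := by
      refine Finset.sum_congr rfl fun t ht => ?_
      have ht' := Finset.mem_Icc.mp ht
      rw [hf₂ t ht'.1 ht'.2]
      linear_combination (-(phiC s b e t)) * hcont
    rw [hdec, hsupp, hval]
    calc |∑ t ∈ Finset.Icc r e, ((b₂ - b₁) * ((t:ℝ) - r)) * phiC s b e t|
        ≤ Real.sqrt (∑ t ∈ Finset.Icc r e, ((b₂ - b₁) * ((t:ℝ) - r)) ^ 2)
            * Real.sqrt (∑ t ∈ Finset.Icc r e, phiC s b e t ^ 2) := abs_inner_le _ _ _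
      _ ≤ Real.sqrt (∑ t ∈ Finset.Icc r e, ((b₂ - b₁) * ((t:ℝ) - r)) ^ 2) * 1 := by
          have := hphisub (Finset.Icc r e) (Finset.Icc_subset_Icc (by omega) heT)
          nlinarith [Real.sqrt_nonneg (∑ t ∈ Finset.Icc r e, ((b₂ - b₁) * ((t:ℝ) - r)) ^ 2),
            Real.sqrt_nonneg (∑ t ∈ Finset.Icc r e, phiC s b e t ^ 2)]
      _ ≤ |b₁ - b₂| * Real.sqrt ((((e:ℝ)-r) + 1)^3 / 3) := by
          rw [mul_one]
          have hq : ∑ t ∈ Finset.Icc r e, ((b₂ - b₁) * ((t:ℝ) - r)) ^ 2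
              = (b₂ - b₁)^2 * ∑ t ∈ Finset.Icc r e,
                  ((1:ℝ)*(t:ℝ)^2 + (-2*(r:ℝ))*(t:ℝ) + (r:ℝ)^2) := by
            rw [Finset.mul_sum]
            exact Finset.sum_congr rfl fun t _ => by ring
          have hr1 : (r:ℝ) + 1 ≤ e := by exact_mod_cast hre
          have hSq : ∑ t ∈ Finset.Icc r e, ((1:ℝ)*(t:ℝ)^2 + (-2*(r:ℝ))*(t:ℝ) + (r:ℝ)^2)
              ≤ (((e:ℝ)-r) + 1)^3 / 3 := by
            rw [sum_Icc_quad r e (by omega)]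
            nlinarith [sq_nonneg ((e:ℝ) - r)]
          rw [hq, Real.sqrt_mul (sq_nonneg _), Real.sqrt_sq_eq_abs, abs_sub_comm b₂ b₁]
          exact mul_le_mul_of_nonneg_left (Real.sqrt_le_sqrt hSq) (abs_nonneg _)

end phiFacts

private lemma numeric_bound (lT Δ m C₃ C₁ : ℝ) (hlT : 0 < lT) (hΔ : 0 < Δ) (hm : 0 ≤ m)
    (hC₃ : 0 ≤ C₃)
    (hmin : m ≤ 2 ^ ((1:ℝ)/3) * C₃ * lT ^ ((1:ℝ)/3) / Δ ^ ((2:ℝ)/3))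
    (hC₁ : C₁ = Real.sqrt (2/3) * C₃ ^ ((3:ℝ)/2) + Real.sqrt 8) :
    Real.sqrt (8 * lT) + Δ * Real.sqrt (m^3/3) ≤ C₁ * Real.sqrt lT := by
  have h8 : Real.sqrt (8*lT) = Real.sqrt 8 * Real.sqrt lT := Real.sqrt_mul (by norm_num) _
  have hKcube : (2 ^ ((1:ℝ)/3) * C₃ * lT ^ ((1:ℝ)/3) / Δ ^ ((2:ℝ)/3))^3
      = 2 * C₃^3 * lT / Δ^2 := by
    rw [div_pow, mul_pow, mul_pow,
      ← Real.rpow_natCast ((2:ℝ) ^ ((1:ℝ)/3)) 3, ← Real.rpow_natCast (lT ^ ((1:ℝ)/3)) 3,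
      ← Real.rpow_natCast (Δ ^ ((2:ℝ)/3)) 3,
      ← Real.rpow_mul (by norm_num : (0:ℝ) ≤ 2), ← Real.rpow_mul hlT.le,
      ← Real.rpow_mul hΔ.le]
    norm_num
  have hmc : Δ^2 * (m^3/3) ≤ (2/3) * C₃^3 * lT := by
    have h3 : m^3 ≤ 2 * C₃^3 * lT / Δ^2 := by rw [← hKcube]; exact pow_le_pow_left₀ hm hmin 3
    have hΔ2 : (0:ℝ) < Δ^2 := by positivity
    rw [le_div_iff₀ hΔ2] at h3
    nlinarith
  have hsq : Δ * Real.sqrt (m^3/3) = Real.sqrt (Δ^2 * (m^3/3)) := by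
    rw [Real.sqrt_mul (sq_nonneg Δ), Real.sqrt_sq hΔ.le]
  have hC32 : C₃ ^ ((3:ℝ)/2) = Real.sqrt (C₃^3) := by
    rw [Real.sqrt_eq_rpow, ← Real.rpow_natCast C₃ 3, ← Real.rpow_mul hC₃]
    norm_num
  have hrhs : Real.sqrt (2/3) * C₃ ^ ((3:ℝ)/2) * Real.sqrt lT
      = Real.sqrt ((2/3) * C₃^3 * lT) := by
    rw [Real.sqrt_mul (by positivity : (0:ℝ) ≤ 2/3 * C₃^3), Real.sqrt_mul (by norm_num : (0:ℝ) ≤ 2/3), hC32]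
  have hfin : Real.sqrt (Δ^2 * (m^3/3)) ≤ Real.sqrt ((2/3) * C₃^3 * lT) :=
    Real.sqrt_le_sqrt hmc
  rw [hC₁, h8, hsq, add_mul]
  linarith [hrhs ▸ hfin]

/-- if the kink is too close to one of the end-points of `[s, e]` (relative
to its magnitude), then the maximal contrast value of the observed data is at most
`C₁ √(log T)`, where `C₃ = 63^{1/3}(2√2 + 4)^{2/3}` and `C₁ = √(2/3)·C₃^{3/2} + √8`. -/
theorem statement15 (T s r e : ℕ) (hT : 2 ≤ T) (hs : 1 ≤ s) (hsr : s < r) (hre : r < e)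
    (heT : e ≤ T) (f : ℕ → ℝ) (a₁ b₁ a₂ b₂ Δ : ℝ) (hslope : b₁ ≠ b₂)
    (hcont : a₁ + b₁ * r = a₂ + b₂ * r)
    (hf₁ : ∀ t, s ≤ t → t ≤ r → f t = a₁ + b₁ * t)
    (hf₂ : ∀ t, r ≤ t → t ≤ e → f t = a₂ + b₂ * t)
    (hΔ : Δ = |b₁ - b₂|)
    (C₃ C₁ : ℝ) (hC₃ : C₃ = (63 : ℝ) ^ ((1 : ℝ) / 3) * (2 * Real.sqrt 2 + 4) ^ ((2 : ℝ) / 3))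
    (hC₁ : C₁ = Real.sqrt (2 / 3) * C₃ ^ ((3 : ℝ) / 2) + Real.sqrt 8)
    (hmin : min ((r : ℝ) - s) ((e : ℝ) - r) + 1 ≤
      (2 : ℝ) ^ ((1 : ℝ) / 3) * C₃ * (Real.log T) ^ ((1 : ℝ) / 3) / Δ ^ ((2 : ℝ) / 3))
    (X : ℕ → ℝ)
    (hX : ∀ b, s < b → b < e →
      |innerT T (fun t => X t - f t) (phiC s b e)| ≤ Real.sqrt (8 * Real.log T)) :
    ∀ b, s < b → b < e → contrastC T s b e X ≤ C₁ * Real.sqrt (Real.log T) := by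
  intro b hsb hbe
  have hlogpos : 0 < Real.log T := Real.log_pos (by exact_mod_cast (show 1 < T by omega))
  have hΔpos : 0 < Δ := by rw [hΔ]; exact abs_pos.mpr (sub_ne_zero.mpr hslope)
  have hC₃nn : 0 ≤ C₃ := by
    rw [hC₃]
    have h2 : (0:ℝ) ≤ Real.sqrt 2 := Real.sqrt_nonneg 2
    positivity
  have hrs : (s:ℝ) ≤ r := by exact_mod_cast hsr.le
  have hree : (r:ℝ) ≤ e := by exact_mod_cast hre.le
  have hmnn : (0:ℝ) ≤ min ((r:ℝ)-s) ((e:ℝ)-r) + 1 := by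
    have := le_min (show (0:ℝ) ≤ (r:ℝ)-s by linarith) (show (0:ℝ) ≤ (e:ℝ)-r by linarith)
    linarith
  have hsig := signal_bound T r hs hsr hre heT hsb hbe f a₁ b₁ a₂ b₂ hcont hf₁ hf₂
  rw [← hΔ] at hsig
  have hXb := hX b hsb hbe
  unfold innerT at hXb
  unfold contrastC innerT
  have hnum := numeric_bound (Real.log T) Δ (min ((r:ℝ)-s) ((e:ℝ)-r) + 1) C₃ C₁
    hlogpos hΔpos hmnn hC₃nn hmin hC₁
  have hdec : ∑ t ∈ Finset.Icc 1 T, X t * phiC s b e t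
      = ∑ t ∈ Finset.Icc 1 T, (X t - f t) * phiC s b e t
        + ∑ t ∈ Finset.Icc 1 T, f t * phiC s b e t := by
    rw [← Finset.sum_add_distrib]
    exact Finset.sum_congr rfl fun t _ => by ring
  calc |∑ t ∈ Finset.Icc 1 T, X t * phiC s b e t|
      ≤ |∑ t ∈ Finset.Icc 1 T, (X t - f t) * phiC s b e t|
        + |∑ t ∈ Finset.Icc 1 T, f t * phiC s b e t| := by
        rw [hdec]; exact abs_add_le _ _
    _ ≤ Real.sqrt (8 * Real.log T)
        + Δ * Real.sqrt ((min ((r:ℝ)-s) ((e:ℝ)-r) + 1)^3 / 3) := add_le_add hXb hsig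
    _ ≤ C₁ * Real.sqrt (Real.log T) := hnum
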